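/- Let Δ be the simplex category and Δ₊ its wide subcategory of monomorphisms. For every k ∈ ℕ, the map sending a subpresheaf G of the representable presheaf y[k] over Δ to the subpresheaf of the representable presheaf y[k] over Δ₊ whose sections over [l] are the monomorphisms f : [l] ⟶ [k] belonging to G([l]), is a well-defined order isomorphism from the lattice of subpresheaves of y[k] over Δ onto the lattice of subpresheaves of y[k] over Δ₊ (its inverse adds to a semi-simplicial subpresheaf all of its degenerate elements). -/

import Mathlib

open CategoryTheory Simplicial Opposite CategoryTheory.GrothendieckTopology

/-- The semi-simplex category: the wide subcategory of `SimplexCategory`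
whose morphisms are the monomorphisms. -/
abbrev SemiSimplexCat : Type :=
  WideSubcategory (MorphismProperty.monomorphisms SimplexCategory)

namespace Stmt19Aux

variable (k : ℕ)

/-- Forward map. -/
def fwd (G : Subfunctor (yoneda.obj (⦋k⦌ : SimplexCategory))) :
    Subfunctor (yoneda.obj (⟨⦋k⦌⟩ : SemiSimplexCat)) where
  obj U := {f | f.1 ∈ G.obj (op U.unop.obj)}
  map {U V} i := by
    rintro f hf
    have := G.map (Quiver.Hom.op (i.unop.1 : V.unop.obj ⟶ U.unop.obj)) hf
    exact this

/-- Backward map. -/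
def bwd (H : Subfunctor (yoneda.obj (⟨⦋k⦌⟩ : SemiSimplexCat))) :
    Subfunctor (yoneda.obj (⦋k⦌ : SimplexCategory)) where
  obj U := {f | ∃ (l' : SimplexCategory) (e : U.unop ⟶ l')
      (m : (⟨l'⟩ : SemiSimplexCat) ⟶ ⟨⦋k⦌⟩), e ≫ m.1 = f ∧ m ∈ H.obj (op ⟨l'⟩)}
  map {U V} i := by
    rintro f ⟨l', e, m, fac, hm⟩
    exact ⟨l', i.unop ≫ e, m, by simp [← fac], hm⟩

lemma bwd_fwd (G : Subfunctor (yoneda.obj (⦋k⦌ : SimplexCategory))) :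
    bwd k (fwd k G) = G := by
  ext U f
  constructor
  · rintro ⟨l', e, m, fac, hm⟩
    have := G.map e.op hm
    simpa [fac] using this
  · intro hf
    haveI : IsSplitEpi (Limits.factorThruImage f) := isSplitEpi_of_epi _
    refine ⟨Limits.image f, Limits.factorThruImage f,
      ⟨Limits.image.ι f, MorphismProperty.monomorphisms.infer_property _⟩, Limits.image.fac f, ?_⟩
    have h := congrArg (fun g => section_ (Limits.factorThruImage f) ≫ g) (Limits.image.fac f)
    simp only [← Category.assoc, IsSplitEpi.id, Category.id_comp] at h
    have := G.map (section_ (Limits.factorThruImage f)).op hf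
    simpa [fwd, ← h] using this

lemma fwd_bwd (H : Subfunctor (yoneda.obj (⟨⦋k⦌⟩ : SemiSimplexCat))) :
    fwd k (bwd k H) = H := by
  ext U m
  constructor
  · rintro ⟨l', e, m', fac, hm⟩
    haveI : Mono m.1 := m.2
    haveI : Mono m'.1 := m'.2
    haveI hem : Mono (e ≫ m'.1) := by rw [fac]; exact m.2
    haveI : Mono e := mono_of_mono e m'.1
    have := H.map (Quiver.Hom.op (⟨e, this⟩ : U.unop ⟶ (⟨l'⟩ : SemiSimplexCat))) hm
    have heq : ((yoneda.obj (⟨⦋k⦌⟩ : SemiSimplexCat)).map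
        (Quiver.Hom.op (⟨e, ‹Mono e›⟩ : U.unop ⟶ (⟨l'⟩ : SemiSimplexCat))) m') = m := by
      apply WideSubcategory.hom_ext
      simpa using fac
    rw [Set.mem_preimage, heq] at this
    exact this
  · intro hm
    exact ⟨U.unop.obj, 𝟙 _, m, Category.id_comp _, hm⟩

lemma bwd_mono : Monotone (bwd k) := by
  intro H H' h U f hf
  obtain ⟨l', e, m, fac, hm⟩ := hf
  exact ⟨l', e, m, fac, h _ hm⟩

lemma fwd_mono : Monotone (fwd k) := by
  intro G G' h U f hf
  exact h _ hf

end Stmt19Aux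

theorem stmt19 (k : ℕ) :
    ∃ e : Subfunctor (yoneda.obj (⦋k⦌ : SimplexCategory)) ≃o
        Subfunctor (yoneda.obj (⟨⦋k⦌⟩ : SemiSimplexCat)),
      ∀ (G : Subfunctor (yoneda.obj (⦋k⦌ : SimplexCategory)))
        (l : SimplexCategory) (f : (⟨l⟩ : SemiSimplexCat) ⟶ ⟨⦋k⦌⟩),
        f ∈ (e G).obj (op ⟨l⟩) ↔ f.1 ∈ G.obj (op l) := by
  refine ⟨⟨⟨Stmt19Aux.fwd k, Stmt19Aux.bwd k, Stmt19Aux.bwd_fwd k, Stmt19Aux.fwd_bwd k⟩, ?_⟩, ?_⟩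
  · intro G G'
    constructor
    · intro h
      have h' : Stmt19Aux.fwd k G ≤ Stmt19Aux.fwd k G' := h
      have := Stmt19Aux.bwd_mono k h'
      rwa [Stmt19Aux.bwd_fwd, Stmt19Aux.bwd_fwd] at this
    · exact fun h => Stmt19Aux.fwd_mono k h
  · intro G l f
    exact Iff.rfl
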